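/- Fix u > 0, b > 0, λ ∈ (0,1) and δ > −1, and for a > 0 set s(a) := D(a)/√K(a), where D(a) := 1 − λ + λ a (1+δ) and K(a) := u(1 − λ + λ b²(1+δ)²) + (1 − λ + λ a²(1+δ)²) − D(a)² (one has K(a) > 0). Then s is differentiable in a and ∂s/∂a > 0 if and only if a < (1+u)/(1+δ) + (λ/(1−λ)) · u b² (1+δ). -/

import Mathlib

/-- Monotonicity of the two-state portfolio Sharpe ratio in the
mean-excess-return ratio a: for a > 0, s(a) = D(a)/√K(a) is differentiable (K(a) > 0) and
∂s/∂a > 0 if and only if a < (1+u)/(1+δ) + (λ/(1−λ))·u b²(1+δ). -/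
theorem sharpe_monotone_in_a
    (u b lam δ : ℝ) (hu : 0 < u) (hb : 0 < b)
    (hlam : lam ∈ Set.Ioo (0:ℝ) 1) (hδ : -1 < δ)
    (D K s : ℝ → ℝ)
    (hD : ∀ a, D a = 1 - lam + lam * a * (1 + δ))
    (hK : ∀ a, K a = u * (1 - lam + lam * b^2 * (1+δ)^2)
        + (1 - lam + lam * a^2 * (1+δ)^2) - (D a)^2)
    (hs : ∀ a, 0 < a → s a = D a / Real.sqrt (K a)) :
    ∀ a, 0 < a →
      0 < K a ∧ DifferentiableAt ℝ s a ∧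
      (0 < deriv s a ↔ a < (1+u)/(1+δ) + lam/(1-lam) * (u * b^2 * (1+δ))) := by
  intro a ha
  obtain ⟨hl0, hl1⟩ := hlam
  have hc : (0:ℝ) < 1 + δ := by linarith
  have h1l : (0:ℝ) < 1 - lam := by linarith
  set M := u * (1 - lam + lam * b^2 * (1+δ)^2) with hMdef
  have hMpos : 0 < M := by
    have h2 : 0 ≤ lam * b^2 * (1+δ)^2 := by positivity
    have : 0 < 1 - lam + lam * b^2 * (1+δ)^2 := by linarith
    exact mul_pos hu this
  have hq : ∀ x, K x = M + lam*(1-lam)*(x*(1+δ)-1)^2 := by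
    intro x; rw [hK, hD]; ring
  have hqpos : ∀ x : ℝ, 0 < M + lam*(1-lam)*(x*(1+δ)-1)^2 := by
    intro x
    have : 0 ≤ lam*(1-lam)*(x*(1+δ)-1)^2 := by positivity
    linarith
  have hKpos : 0 < K a := by rw [hq a]; exact hqpos a
  have hnum : HasDerivAt (fun x:ℝ => 1 - lam + lam*x*(1+δ)) (lam*(1+δ)) a := by
    have := (((hasDerivAt_id a).const_mul lam).mul_const (1+δ)).const_add (1-lam)
    simpa [mul_assoc] using this
  have hinner : HasDerivAt (fun x:ℝ => M + lam*(1-lam)*(x*(1+δ)-1)^2)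
      (lam*(1-lam)*(2*(a*(1+δ)-1)*(1+δ))) a := by
    have hb1 : HasDerivAt (fun x:ℝ => x*(1+δ)-1) (1+δ) a := by
      simpa using ((hasDerivAt_id a).mul_const (1+δ)).sub_const 1
    have hb2 := hb1.pow 2
    have := (hb2.const_mul (lam*(1-lam))).const_add M
    exact this.congr_deriv (by norm_num)
  have hsq := hinner.sqrt (ne_of_gt (hqpos a))
  have hgpos : 0 < Real.sqrt (M + lam*(1-lam)*(a*(1+δ)-1)^2) :=
    Real.sqrt_pos.mpr (hqpos a)
  have hdivf := hnum.div hsq (ne_of_gt hgpos)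
  have heq : s =ᶠ[nhds a]
      (fun x => (1-lam+lam*x*(1+δ)) / Real.sqrt (M + lam*(1-lam)*(x*(1+δ)-1)^2)) := by
    filter_upwards [isOpen_Ioi.mem_nhds ha] with x hx
    rw [hs x hx, hD x, hq x]
  have hds := hdivf.congr_of_eventuallyEq heq
  refine ⟨hKpos, hds.differentiableAt, ?_⟩
  rw [hds.deriv]
  set X := (1+u)/(1+δ) + lam/(1-lam) * (u * b^2 * (1+δ)) with hX
  set g := Real.sqrt (M + lam*(1-lam)*(a*(1+δ)-1)^2) with hg
  have hg2 : g^2 = M + lam*(1-lam)*(a*(1+δ)-1)^2 := Real.sq_sqrt (hqpos a).le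
  have hV : (lam*(1+δ) * g - (1-lam+lam*a*(1+δ)) *
        (lam*(1-lam)*(2*(a*(1+δ)-1)*(1+δ)) / (2*g))) / g^2
      = (lam*(1-lam)*(1+δ)^2/g^3) * (X - a) := by
    have hgne : g ≠ 0 := ne_of_gt hgpos
    have e1 : (lam*(1+δ) * g - (1-lam+lam*a*(1+δ)) *
          (lam*(1-lam)*(2*(a*(1+δ)-1)*(1+δ)) / (2*g))) / g^2
        = (2*(lam*(1+δ))*g^2 - (1-lam+lam*a*(1+δ)) *
            (lam*(1-lam)*(2*(a*(1+δ)-1)*(1+δ)))) / (2*g^3) := by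
      field_simp
    rw [e1, hg2, hX]
    field_simp
    ring
  rw [hV]
  have hCpos : 0 < lam*(1-lam)*(1+δ)^2/g^3 := by positivity
  constructor
  · intro h
    by_contra hna
    push_neg at hna
    have h1 : X - a ≤ 0 := by linarith
    have := mul_nonpos_of_nonneg_of_nonpos hCpos.le h1
    linarith
  · intro h
    have : 0 < X - a := by linarith
    exact mul_pos hCpos this
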